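/- The map g is Li–Yorke sensitive: there exists δ > 0 such that for every point x ∈ [−1,1] and every open neighborhood V of x there is a point y ∈ V with liminf_{n→∞} |gⁿ(x) − gⁿ(y)| = 0 and limsup_{n→∞} |gⁿ(x) − gⁿ(y)| ≥ δ. -/

import Mathlib

open Filter

/-- The map `g : [-1,1] → [-1,1]` given by `g(x) = 2x + 2` on `[-1,-1/2]`,
`g(x) = -2x` on `[-1/2,0]`, and `g(x) = -x` on `[0,1]`. -/
noncomputable def gMap (x : ℝ) : ℝ :=
  if x ≤ -(1 / 2) then 2 * x + 2 else if x ≤ 0 then -2 * x else -x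

noncomputable def tMap (x : ℝ) : ℝ := if x ≤ 1/2 then 2*x else 2 - 2*x

noncomputable def bv (b : Bool) : ℝ := if b then 1 else 0

lemma bv_nonneg (b : Bool) : 0 ≤ bv b := by unfold bv; split <;> norm_num
lemma bv_le_one (b : Bool) : bv b ≤ 1 := by unfold bv; split <;> norm_num

lemma tMap_mem {z : ℝ} (hz : z ∈ Set.Icc (0:ℝ) 1) : tMap z ∈ Set.Icc (0:ℝ) 1 := by
  obtain ⟨h0, h1⟩ := hz
  unfold tMap; split <;> constructor <;> linarith

lemma tMap_lip (a b : ℝ) : |tMap a - tMap b| ≤ 2 * |a - b| := by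
  have h1 := le_abs_self (a - b)
  have h2 := neg_abs_le (a - b)
  rw [abs_sub_le_iff]; unfold tMap
  split_ifs <;> constructor <;> linarith

lemma tMap_symm {u : ℝ} (h0 : 0 ≤ u) (h1 : u ≤ 1) : tMap (1 - u) = tMap u := by
  unfold tMap
  split_ifs
  · linarith
  · ring
  · ring
  · linarith

lemma tMap_tMap {t : ℝ} (h : t ∈ Set.Ico (0:ℝ) 1) : tMap (tMap t) = tMap (Int.fract (2*t)) := by
  obtain ⟨h0, h1⟩ := h
  rcases lt_trichotomy t (1/2) with ht | ht | ht
  · have e1 : tMap t = 2*t := if_pos (by linarith)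
    rw [e1, Int.fract_eq_self.2 ⟨by linarith, by linarith⟩]
  · subst ht
    norm_num [tMap, Int.fract_one]
  · have e1 : tMap t = 2 - 2*t := if_neg (by linarith)
    have hfl : ⌊(2*t)⌋ = 1 := by
      rw [Int.floor_eq_iff] <;> push_cast <;> constructor <;> linarith
    have hfr : Int.fract (2*t) = 2*t - 1 := by rw [Int.fract, hfl]; push_cast; ring
    rw [e1, hfr, show (2 - 2*t : ℝ) = 1 - (2*t - 1) by ring,
      tMap_symm (by linarith) (by linarith)]

lemma fract_two_mul_pow (t : ℝ) (n : ℕ) :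
    Int.fract (2^(n+1) * t) = Int.fract (2 * Int.fract (2^n * t)) := by
  have h : 2 * Int.fract (2^n * t) = 2^(n+1) * t - ((2 * ⌊2^n * t⌋ : ℤ) : ℝ) := by
    rw [Int.fract]; push_cast; ring
  rw [h, Int.fract_sub_intCast]

lemma fract_pow_mul_fract (s : ℝ) (k : ℕ) :
    Int.fract ((2:ℝ)^k * Int.fract s) = Int.fract (2^k * s) := by
  have h : (2:ℝ)^k * Int.fract s = 2^k * s - (((2^k * ⌊s⌋ : ℤ)) : ℝ) := by
    rw [Int.fract]; push_cast; ring
  rw [h, Int.fract_sub_intCast]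

noncomputable def Fseq (τ : ℝ) (n : ℕ) : ℝ := Int.fract (2^n * τ)

lemma Fseq_mem (τ : ℝ) (n : ℕ) : Fseq τ n ∈ Set.Ico (0:ℝ) 1 :=
  ⟨Int.fract_nonneg _, Int.fract_lt_one _⟩

noncomputable def dDig (τ : ℝ) (n : ℕ) : Bool := if 1/2 ≤ Fseq τ n then true else false

lemma Fseq_succ (τ : ℝ) (n : ℕ) : Fseq τ n = bv (dDig τ n)/2 + Fseq τ (n+1)/2 := by
  have h : Fseq τ (n+1) = Int.fract (2 * Fseq τ n) := fract_two_mul_pow τ n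
  have hu0 : 0 ≤ Fseq τ n := (Fseq_mem τ n).1
  have hu1 : Fseq τ n < 1 := (Fseq_mem τ n).2
  unfold dDig bv
  by_cases hc : (1:ℝ)/2 ≤ Fseq τ n
  · have hfl : ⌊(2 * Fseq τ n)⌋ = 1 := by
      rw [Int.floor_eq_iff] <;> push_cast <;> constructor <;> linarith
    have : Int.fract (2 * Fseq τ n) = 2 * Fseq τ n - 1 := by
      rw [Int.fract, hfl]; push_cast; ring
    rw [if_pos hc]; rw [this] at h; simp only [if_pos trivial]; linarith
  · have : Int.fract (2 * Fseq τ n) = 2 * Fseq τ n :=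
      Int.fract_eq_self.2 ⟨by linarith, by linarith⟩
    rw [if_neg hc]; rw [this] at h; norm_num; linarith

lemma tMap_iter (t : ℝ) (h : t ∈ Set.Ico (0:ℝ) 1) (k : ℕ) :
    tMap^[k] (tMap t) = tMap (Fseq t k) := by
  induction k generalizing t with
  | zero => simp [Fseq, Int.fract_eq_self.2 h]
  | succ k ih =>
    rw [Function.iterate_succ_apply, tMap_tMap h,
      ih _ ⟨Int.fract_nonneg _, Int.fract_lt_one _⟩]
    congr 1
    unfold Fseq
    rw [fract_pow_mul_fract, show (2:ℝ)^k * (2*t) = 2^(k+1) * t by ring]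

noncomputable def sepD (τ : ℝ) (N k : ℕ) : Bool :=
  if tMap (Fseq τ (N + 4^k)) < 1/2 then true else false

noncomputable def sDig (τ : ℝ) (N i : ℕ) : Bool :=
  if i ≤ N then dDig τ i else
    if i - N = 4^(Nat.log 4 (i - N)) then false
    else if i - N = 4^(Nat.log 4 (i - N)) + 1 ∨ i - N = 4^(Nat.log 4 (i - N)) + 2 then
      sepD τ N (Nat.log 4 (i - N))
    else dDig τ i

lemma four_pow_pos (k : ℕ) : 1 ≤ 4^k := Nat.one_le_pow _ _ (by norm_num)
lemma four_pow_succ (k : ℕ) : 4^(k+1) = 4 * 4^k := by rw [pow_succ]; ring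
lemma lt_four_pow (k : ℕ) : k < 4^k := Nat.lt_pow_self (by norm_num : 1 < 4)

lemma sDig_block0 (τ : ℝ) (N k : ℕ) : sDig τ N (N + 4^k) = false := by
  have h1 := four_pow_pos k
  have hl : Nat.log 4 (N + 4^k - N) = k := by
    rw [show N + 4^k - N = 4^k by omega]
    exact Nat.log_pow (by norm_num : 1 < 4) k
  unfold sDig
  rw [if_neg (by omega), hl, if_pos (by omega)]

lemma sDig_block1 (τ : ℝ) (N k : ℕ) : sDig τ N (N + 4^k + 1) = sepD τ N k := by
  have h1 := four_pow_pos k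
  have h2 := four_pow_succ k
  have hl : Nat.log 4 (N + 4^k + 1 - N) = k := by
    rw [show N + 4^k + 1 - N = 4^k + 1 by omega]
    exact Nat.log_eq_of_pow_le_of_lt_pow (by omega) (by omega)
  unfold sDig
  rw [if_neg (by omega), hl, if_neg (by omega), if_pos (by omega)]

lemma sDig_block2 (τ : ℝ) (N k : ℕ) : sDig τ N (N + 4^k + 2) = sepD τ N k := by
  have h1 := four_pow_pos k
  have h2 := four_pow_succ k
  have hl : Nat.log 4 (N + 4^k + 2 - N) = k := by
    rw [show N + 4^k + 2 - N = 4^k + 2 by omega]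
    exact Nat.log_eq_of_pow_le_of_lt_pow (by omega) (by omega)
  unfold sDig
  rw [if_neg (by omega), hl, if_neg (by omega), if_pos (by omega)]

lemma sDig_copy1 (τ : ℝ) (N i : ℕ) (h : i ≤ N) : sDig τ N i = dDig τ i := if_pos h

lemma sDig_copy2 (τ : ℝ) (N k i : ℕ) (h1 : N + 4^k + 3 ≤ i) (h2 : i < N + 4^(k+1)) :
    sDig τ N i = dDig τ i := by
  have hp := four_pow_pos k
  have hs := four_pow_succ k
  have hl : Nat.log 4 (i - N) = k :=
    Nat.log_eq_of_pow_le_of_lt_pow (by omega) (by omega)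
  unfold sDig
  rw [if_neg (by omega), hl, if_neg (by omega), if_neg (by omega)]

noncomputable def Gseq (τ : ℝ) (N n : ℕ) : ℝ := ∑' i, bv (sDig τ N (n+i)) / 2^(i+1)

lemma term_le (b : Bool) (i : ℕ) : bv b / 2^(i+1) ≤ 1/2/2^i := by
  have h := bv_le_one b
  have hp : (0:ℝ) < 2^i := by positivity
  rw [pow_succ, div_le_div_iff₀ (by positivity) (by positivity)]
  nlinarith

lemma summable_G (τ : ℝ) (N n : ℕ) :
    Summable (fun i : ℕ => bv (sDig τ N (n+i)) / 2^(i+1)) :=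
  Summable.of_nonneg_of_le (fun i => div_nonneg (bv_nonneg _) (by positivity)) (fun i => term_le _ i)
    (summable_geometric_two' 1)

lemma Gseq_nonneg (τ : ℝ) (N n : ℕ) : 0 ≤ Gseq τ N n :=
  tsum_nonneg fun i => div_nonneg (bv_nonneg _) (by positivity)

lemma Gseq_le_one (τ : ℝ) (N n : ℕ) : Gseq τ N n ≤ 1 := by
  have h := Summable.tsum_le_tsum (fun i => term_le (sDig τ N (n+i)) i) (summable_G τ N n)
    (summable_geometric_two' 1)
  rwa [tsum_geometric_two' 1] at h

lemma Gseq_succ (τ : ℝ) (N n : ℕ) :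
    Gseq τ N n = bv (sDig τ N n)/2 + Gseq τ N (n+1)/2 := by
  unfold Gseq
  rw [Summable.tsum_eq_zero_add (summable_G τ N n)]
  congr 1
  · norm_num
  · rw [eq_div_iff (two_ne_zero), ← tsum_mul_right]
    apply tsum_congr; intro i
    rw [show n + 1 + i = n + (i+1) by ring, pow_succ, pow_succ]
    field_simp

lemma Gseq_lt_one (τ : ℝ) (N n : ℕ) : Gseq τ N n < 1 := by
  set i0 := N + 4^n - n with hi0
  have hle : n ≤ N + 4^n := le_trans (le_of_lt (lt_four_pow n)) (by omega)
  have hfalse : sDig τ N (n + i0) = false := by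
    rw [show n + i0 = N + 4^n by omega]
    exact sDig_block0 τ N n
  have h : Gseq τ N n < ∑' i : ℕ, 1/2/2^i := by
    apply Summable.tsum_lt_tsum_of_nonneg (fun i => div_nonneg (bv_nonneg _) (by positivity)) (fun i => term_le _ i)
      (i := i0) ?_ (summable_geometric_two' 1)
    rw [hfalse]
    show bv false / 2^(i0+1) < 1/2/2^i0
    unfold bv
    norm_num
    try positivity
  rwa [tsum_geometric_two' 1] at h

lemma fract_Gseq (τ : ℝ) (N n : ℕ) :
    Int.fract ((2:ℝ)^n * Gseq τ N 0) = Gseq τ N n := by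
  induction n with
  | zero =>
    rw [pow_zero, one_mul]
    exact Int.fract_eq_self.2 ⟨Gseq_nonneg τ N 0, Gseq_lt_one τ N 0⟩
  | succ n ih =>
    rw [fract_two_mul_pow, ih]
    have h : 2 * Gseq τ N n = bv (sDig τ N n) + Gseq τ N (n+1) := by
      have := Gseq_succ τ N n; linarith
    rw [h]
    have hG : Int.fract (Gseq τ N (n+1)) = Gseq τ N (n+1) :=
      Int.fract_eq_self.2 ⟨Gseq_nonneg τ N (n+1), Gseq_lt_one τ N (n+1)⟩
    cases hs : sDig τ N n
    · simp [bv, hG]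
    · show Int.fract (bv true + Gseq τ N (n+1)) = Gseq τ N (n+1)
      rw [show bv true + Gseq τ N (n+1) = ((1:ℤ):ℝ) + Gseq τ N (n+1) by unfold bv; norm_num,
        Int.fract_intCast_add, hG]

lemma agree_close (τ : ℝ) (N m : ℕ) :
    ∀ n, (∀ i, n ≤ i → i < n + m → sDig τ N i = dDig τ i) →
    |Fseq τ n - Gseq τ N n| ≤ 1/2^m := by
  induction m with
  | zero =>
    intro n _
    have h1 := Fseq_mem τ n
    have h2 := Gseq_nonneg τ N n
    have h3 := Gseq_le_one τ N n
    rw [pow_zero, abs_le]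
    constructor <;> linarith [h1.1, h1.2]
  | succ m ih =>
    intro n hag
    have hsn : sDig τ N n = dDig τ n := hag n le_rfl (by omega)
    have h1 := Fseq_succ τ n
    have h2 := Gseq_succ τ N n
    have h3 := ih (n+1) (fun i hi hi' => hag i (by omega) (by omega))
    have he : Fseq τ n - Gseq τ N n = (Fseq τ (n+1) - Gseq τ N (n+1))/2 := by
      rw [h1, h2, hsn]; ring
    rw [he, abs_div, abs_two]
    calc |Fseq τ (n+1) - Gseq τ N (n+1)|/2 ≤ (1/2^m)/2 := by linarith
      _ = 1/2^(m+1) := by rw [pow_succ]; ring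

lemma tMap_le_double {z : ℝ} (h : 0 ≤ z) : tMap z ≤ 2 * z := by
  unfold tMap; split <;> linarith

lemma tent_main {x : ℝ} (hx : x ∈ Set.Icc (0:ℝ) 1) {ε : ℝ} (hε : 0 < ε) :
    ∃ y ∈ Set.Icc (0:ℝ) 1, |x - y| < ε ∧
      (∀ ε' > 0, ∀ M : ℕ, ∃ k ≥ M, |tMap^[k] x - tMap^[k] y| < ε') ∧
      (∀ M : ℕ, ∃ k ≥ M, 1/4 ≤ |tMap^[k] x - tMap^[k] y|) := by
  obtain ⟨hx0, hx1⟩ := hx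
  set τ := x/2 with hτdef
  have hτ : τ ∈ Set.Ico (0:ℝ) 1 := ⟨by linarith, by linarith⟩
  have hτh : τ ≤ 1/2 := by linarith
  have hxτ : x = tMap τ := by unfold tMap; rw [if_pos hτh]; ring
  obtain ⟨N, hN⟩ : ∃ N : ℕ, (2:ℝ)/2^N < ε := by
    obtain ⟨N, hN⟩ := pow_unbounded_of_one_lt (2/ε) (by norm_num : (1:ℝ) < 2)
    exact ⟨N, by rw [div_lt_iff₀ (by positivity)]; rw [div_lt_iff₀ hε] at hN; linarith⟩
  set y := tMap (Gseq τ N 0) with hydef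
  have hG0 : Gseq τ N 0 ∈ Set.Ico (0:ℝ) 1 := ⟨Gseq_nonneg τ N 0, Gseq_lt_one τ N 0⟩
  have hy : y ∈ Set.Icc (0:ℝ) 1 := tMap_mem ⟨hG0.1, le_of_lt hG0.2⟩
  -- iterate formulas
  have hxk : ∀ k, tMap^[k] x = tMap (Fseq τ k) := by
    intro k; rw [hxτ]; exact tMap_iter τ hτ k
  have hyk : ∀ k, tMap^[k] y = tMap (Gseq τ N k) := by
    intro k
    rw [hydef, tMap_iter _ hG0 k]
    congr 1
    unfold Fseq
    exact fract_Gseq τ N k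
  refine ⟨y, hy, ?_, ?_, ?_⟩
  · -- closeness
    have hagree : ∀ i, 0 ≤ i → i < 0 + N → sDig τ N i = dDig τ i := by
      intro i _ hi; exact sDig_copy1 τ N i (by omega)
    have hc := agree_close τ N N 0 hagree
    have hF0 : Fseq τ 0 = τ := by
      unfold Fseq; rw [pow_zero, one_mul]; exact Int.fract_eq_self.2 hτ
    have hlip := tMap_lip (Fseq τ 0) (Gseq τ N 0)
    rw [hF0] at hc
    calc |x - y| = |tMap τ - tMap (Gseq τ N 0)| := by rw [hxτ]
      _ ≤ 2 * |τ - Gseq τ N 0| := by rw [hF0] at hlip; exact hlip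
      _ ≤ 2 * (1/2^N) := by linarith
      _ < ε := by rw [mul_one_div]; exact hN
  · -- sync
    intro ε' hε' M
    obtain ⟨k0, hk0⟩ : ∃ k0 : ℕ, (2:ℝ)/2^k0 < ε' := by
      obtain ⟨K, hK⟩ := pow_unbounded_of_one_lt (2/ε') (by norm_num : (1:ℝ) < 2)
      exact ⟨K, by rw [div_lt_iff₀ (by positivity)]; rw [div_lt_iff₀ hε'] at hK; linarith⟩
    set k := max k0 M with hk
    have hkM : M ≤ k := le_max_right _ _
    have hkk0 : k0 ≤ k := le_max_left _ _
    set n := N + 4^k + 3 with hn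
    have hnM : M ≤ n := by have := lt_four_pow k; omega
    set m := 3 * 4^k - 3 with hm
    have h4 : 4^(k+1) = 4 * 4^k := four_pow_succ k
    have hp1 := four_pow_pos k
    have hnm : n + m = N + 4^(k+1) := by omega
    have hagree : ∀ i, n ≤ i → i < n + m → sDig τ N i = dDig τ i := by
      intro i hi hi'
      exact sDig_copy2 τ N k i (by omega) (by omega)
    have hc := agree_close τ N m n hagree
    have hmk : k ≤ m := by have := lt_four_pow k; omega
    have hmono : (1:ℝ)/2^m ≤ 1/2^k := by
      apply one_div_le_one_div_of_le (by positivity)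
      exact pow_le_pow_right₀ (by norm_num) hmk
    refine ⟨n, hnM, ?_⟩
    rw [hxk n, hyk n]
    calc |tMap (Fseq τ n) - tMap (Gseq τ N n)| ≤ 2 * |Fseq τ n - Gseq τ N n| :=
        tMap_lip _ _
      _ ≤ 2 * (1/2^k) := by linarith
      _ = 2/2^k := by rw [mul_one_div]
      _ ≤ 2/2^k0 := div_le_div_of_nonneg_left (by norm_num) (by positivity)
          (pow_le_pow_right₀ (by norm_num) hkk0)
      _ < ε' := hk0
  · -- separation
    intro M
    set k := M with hkdef
    set n := N + 4^k with hn
    have hnM : M ≤ n := by have := lt_four_pow k; omega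
    have e0 : Gseq τ N n = bv (sDig τ N n)/2 + Gseq τ N (n+1)/2 := Gseq_succ τ N n
    have e1 : Gseq τ N (n+1) = bv (sDig τ N (n+1))/2 + Gseq τ N (n+2)/2 := by
      have := Gseq_succ τ N (n+1); rwa [show n+1+1 = n+2 by ring] at this
    have e2 : Gseq τ N (n+2) = bv (sDig τ N (n+2))/2 + Gseq τ N (n+3)/2 := by
      have := Gseq_succ τ N (n+2); rwa [show n+2+1 = n+3 by ring] at this
    have hb0 : sDig τ N n = false := sDig_block0 τ N k
    have hb1 : sDig τ N (n+1) = sepD τ N k := by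
      have := sDig_block1 τ N k; rwa [show N + 4^k + 1 = n + 1 by omega] at this
    have hb2 : sDig τ N (n+2) = sepD τ N k := by
      have := sDig_block2 τ N k; rwa [show N + 4^k + 2 = n + 2 by omega] at this
    have hG3a : 0 ≤ Gseq τ N (n+3) := Gseq_nonneg τ N (n+3)
    have hG3b : Gseq τ N (n+3) ≤ 1 := Gseq_le_one τ N (n+3)
    refine ⟨n, hnM, ?_⟩
    rw [hxk n, hyk n]
    by_cases hsep : tMap (Fseq τ n) < 1/2
    · -- sepD = true : push orbit of y high
      have hsept : sepD τ N k = true := by unfold sepD; rw [if_pos hsep]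
      have hGval : Gseq τ N n = 3/8 + Gseq τ N (n+3)/8 := by
        rw [e0, e1, e2, hb0, hb1, hb2, hsept]
        unfold bv
        norm_num
        ring
      have hGle : Gseq τ N n ≤ 1/2 := by rw [hGval]; linarith
      have hGge : 3/8 ≤ Gseq τ N n := by rw [hGval]; linarith
      have hT : tMap (Gseq τ N n) = 2 * Gseq τ N n := by unfold tMap; rw [if_pos hGle]
      have : 3/4 ≤ tMap (Gseq τ N n) := by rw [hT]; linarith
      rw [abs_sub_comm]
      calc (1:ℝ)/4 ≤ tMap (Gseq τ N n) - tMap (Fseq τ n) := by linarith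
        _ ≤ |tMap (Gseq τ N n) - tMap (Fseq τ n)| := le_abs_self _
    · -- sepD = false : push orbit of y low
      push_neg at hsep
      have hsepf : sepD τ N k = false := by unfold sepD; rw [if_neg (not_lt.2 hsep)]
      have hGval : Gseq τ N n = Gseq τ N (n+3)/8 := by
        rw [e0, e1, e2, hb0, hb1, hb2, hsepf]
        unfold bv
        norm_num
        ring
      have hGle : Gseq τ N n ≤ 1/8 := by rw [hGval]; linarith
      have hT : tMap (Gseq τ N n) ≤ 1/4 := by
        have := tMap_le_double (z := Gseq τ N n) (by rw [hGval]; linarith)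
        linarith
      have hT0 : 0 ≤ tMap (Gseq τ N n) := (tMap_mem ⟨by rw [hGval]; linarith, by rw [hGval]; linarith⟩).1
      calc (1:ℝ)/4 ≤ tMap (Fseq τ n) - tMap (Gseq τ N n) := by linarith
        _ ≤ |tMap (Fseq τ n) - tMap (Gseq τ N n)| := le_abs_self _

lemma gMap_of_nonneg {w : ℝ} (h0 : 0 ≤ w) : gMap w = -w := by
  unfold gMap
  rcases eq_or_lt_of_le h0 with h | h
  · rw [if_neg (by linarith), if_pos (by linarith)]; linarith
  · rw [if_neg (by linarith), if_neg (by linarith)]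

lemma gMap_of_neg {w : ℝ} (h0 : 0 ≤ w) (h1 : w ≤ 1) : gMap (-w) = tMap w := by
  unfold gMap tMap
  split_ifs <;> linarith

lemma tMap_iter_mem {w : ℝ} (h : w ∈ Set.Icc (0:ℝ) 1) (k : ℕ) :
    tMap^[k] w ∈ Set.Icc (0:ℝ) 1 := by
  induction k with
  | zero => exact h
  | succ k ih => rw [Function.iterate_succ_apply']; exact tMap_mem ih

lemma gMap_iter {w : ℝ} (h : w ∈ Set.Icc (0:ℝ) 1) (k : ℕ) :
    gMap^[2*k] w = tMap^[k] w ∧ gMap^[2*k+1] w = -(tMap^[k] w) := by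
  induction k with
  | zero =>
    refine ⟨rfl, ?_⟩
    show gMap w = -w
    exact gMap_of_nonneg h.1
  | succ k ih =>
    have hm := tMap_iter_mem h k
    have e2 : 2*(k+1) = (2*k+1) + 1 := by ring
    have h1 : gMap^[2*(k+1)] w = tMap^[k+1] w := by
      rw [e2, Function.iterate_succ_apply', ih.2, gMap_of_neg hm.1 hm.2]
      exact (Function.iterate_succ_apply' tMap k w).symm
    refine ⟨h1, ?_⟩
    rw [Function.iterate_succ_apply', h1]
    exact gMap_of_nonneg (tMap_iter_mem h (k+1)).1

lemma gMap_abs_iter {x y : ℝ} (hx : x ∈ Set.Icc (0:ℝ) 1) (hy : y ∈ Set.Icc (0:ℝ) 1) (n : ℕ) :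
    |gMap^[n] x - gMap^[n] y| = |tMap^[n/2] x - tMap^[n/2] y| := by
  rcases Nat.even_or_odd n with ⟨k, hk⟩ | ⟨k, hk⟩
  · have hn : n = 2*k := by omega
    have hd : n/2 = k := by omega
    rw [hd, hn, (gMap_iter hx k).1, (gMap_iter hy k).1]
  · have hn : n = 2*k+1 := by omega
    have hd : n/2 = k := by omega
    rw [hd, hn, (gMap_iter hx k).2, (gMap_iter hy k).2,
      show -(tMap^[k] x) - -(tMap^[k] y) = -(tMap^[k] x - tMap^[k] y) by ring, abs_neg]

lemma conclude (a : ℕ → ℝ) (h0 : ∀ n, 0 ≤ a n) (h2 : ∀ n, a n ≤ 2)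
    (hs : ∀ ε > 0, ∀ M : ℕ, ∃ n ≥ M, a n < ε) (hb : ∀ M : ℕ, ∃ n ≥ M, 1/4 ≤ a n) :
    liminf a atTop = 0 ∧ (1/4 : ℝ) ≤ limsup a atTop := by
  have hbdd : IsBoundedUnder (· ≤ ·) atTop a := isBoundedUnder_of ⟨2, h2⟩
  have hbdd' : IsBoundedUnder (· ≥ ·) atTop a := isBoundedUnder_of ⟨0, h0⟩
  constructor
  · apply le_antisymm
    · have hle : ∀ ε > (0:ℝ), liminf a atTop ≤ ε := by
        intro ε hε
        apply liminf_le_of_frequently_le _ hbdd'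
        rw [frequently_atTop]
        intro M
        obtain ⟨n, hn, hn'⟩ := hs ε hε M
        exact ⟨n, hn, le_of_lt hn'⟩
      have := le_of_forall_pos_le_add (a := liminf a atTop) (b := 0)
        (fun ε hε => by simpa using hle ε hε)
      exact this
    · apply le_liminf_of_le hbdd.isCoboundedUnder_ge
      exact Eventually.of_forall h0
  · apply le_limsup_of_frequently_le _ hbdd
    rw [frequently_atTop]
    intro M
    obtain ⟨n, hn, hn'⟩ := hb M
    exact ⟨n, hn, hn'⟩

/-- `g` is Li–Yorke sensitive: there exists `δ > 0` such that for every point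
`x ∈ [-1,1]` and every (relatively) open neighborhood `V` of `x` in `[-1,1]`
there is `y ∈ V` with `liminf |gⁿx - gⁿy| = 0` and `limsup |gⁿx - gⁿy| ≥ δ`. -/
theorem gMap_liYorke_sensitive :
    ∃ δ : ℝ, 0 < δ ∧
      ∀ x ∈ Set.Icc (-1 : ℝ) 1, ∀ V : Set ℝ, V ⊆ Set.Icc (-1 : ℝ) 1 →
        (∃ U : Set ℝ, IsOpen U ∧ V = Set.Icc (-1 : ℝ) 1 ∩ U) → x ∈ V →
        ∃ y ∈ V,
          liminf (fun n => |gMap^[n] x - gMap^[n] y|) atTop = 0 ∧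
          δ ≤ limsup (fun n => |gMap^[n] x - gMap^[n] y|) atTop := by
  refine ⟨1/4, by norm_num, ?_⟩
  intro x hx V hVsub hVU hxV
  obtain ⟨U, hUopen, rfl⟩ := hVU
  obtain ⟨hxI, hxU⟩ := hxV
  obtain ⟨ε, hε, hball⟩ := Metric.isOpen_iff.1 hUopen x hxU
  rcases le_or_gt 0 x with hx0 | hx0
  · -- x ∈ [0,1]
    have hx01 : x ∈ Set.Icc (0:ℝ) 1 := ⟨hx0, hx.2⟩
    obtain ⟨y, hy01, hclose, hsync, hsep⟩ := tent_main hx01 hε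
    have hyU : y ∈ U := hball (by
      rw [Metric.mem_ball, Real.dist_eq, abs_sub_comm]; exact hclose)
    have hyI : y ∈ Set.Icc (-1:ℝ) 1 := ⟨by linarith [hy01.1], hy01.2⟩
    refine ⟨y, ⟨hyI, hyU⟩, ?_⟩
    have habs : ∀ n, |gMap^[n] x - gMap^[n] y| = |tMap^[n/2] x - tMap^[n/2] y| :=
      fun n => gMap_abs_iter hx01 hy01 n
    have hbound : ∀ n, |gMap^[n] x - gMap^[n] y| ≤ 2 := by
      intro n
      rw [habs n, abs_le]
      have h1 := tMap_iter_mem hx01 (n/2)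
      have h2 := tMap_iter_mem hy01 (n/2)
      constructor <;> [linarith [h1.1, h2.2]; linarith [h1.2, h2.1]]
    have hsyn : ∀ ε' > (0:ℝ), ∀ M : ℕ, ∃ n ≥ M, |gMap^[n] x - gMap^[n] y| < ε' := by
      intro ε' hε' M
      obtain ⟨k, hkM, hk⟩ := hsync ε' hε' M
      refine ⟨2*k, by omega, ?_⟩
      rw [habs, Nat.mul_div_cancel_left k (by norm_num)]
      exact hk
    have hsp : ∀ M : ℕ, ∃ n ≥ M, (1:ℝ)/4 ≤ |gMap^[n] x - gMap^[n] y| := by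
      intro M
      obtain ⟨k, hkM, hk⟩ := hsep M
      refine ⟨2*k, by omega, ?_⟩
      rw [habs, Nat.mul_div_cancel_left k (by norm_num)]
      exact hk
    exact conclude _ (fun n => abs_nonneg _) hbound hsyn hsp
  · -- x ∈ [-1,0)
    set x' := gMap x with hx'
    have hx'01 : x' ∈ Set.Icc (0:ℝ) 1 := by
      rw [hx']; unfold gMap; split_ifs <;> constructor <;> linarith [hx.1, hx.2]
    obtain ⟨y', hy'01, hclose, hsync, hsep⟩ := tent_main hx'01 hε
    obtain ⟨y, hyI, hgy, hyx⟩ :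
        ∃ y, y ∈ Set.Icc (-1:ℝ) 1 ∧ gMap y = y' ∧ |x - y| ≤ |x' - y'| / 2 := by
      rcases le_or_gt x (-(1/2)) with hbr | hbr
      · refine ⟨(y' - 2)/2, ⟨by linarith [hy'01.1], by linarith [hy'01.2]⟩, ?_, ?_⟩
        · unfold gMap; rw [if_pos (by linarith [hy'01.2])]; ring
        · have hx'e : x' = 2*x + 2 := by rw [hx']; unfold gMap; rw [if_pos hbr]
          rw [show x - (y'-2)/2 = (x' - y')/2 by rw [hx'e]; ring, abs_div, abs_two]
      · refine ⟨-y'/2, ⟨by linarith [hy'01.2], by linarith [hy'01.1]⟩, ?_, ?_⟩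
        · unfold gMap; split_ifs <;> linarith [hy'01.1, hy'01.2]
        · have hx'e : x' = -2*x := by
            rw [hx']; unfold gMap; rw [if_neg (by linarith), if_pos (by linarith)]
          rw [show x - (-y'/2) = -((x' - y')/2) by rw [hx'e]; ring, abs_neg, abs_div,
            abs_two]
    have hyU : y ∈ U := hball (by
      rw [Metric.mem_ball, Real.dist_eq, abs_sub_comm]
      have := abs_nonneg (x' - y')
      linarith)
    refine ⟨y, ⟨hyI, hyU⟩, ?_⟩
    have habs : ∀ n, |gMap^[n+1] x - gMap^[n+1] y| = |tMap^[n/2] x' - tMap^[n/2] y'| := by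
      intro n
      rw [Function.iterate_succ_apply, Function.iterate_succ_apply, hgy, ← hx']
      exact gMap_abs_iter hx'01 hy'01 n
    have hbound : ∀ n, |gMap^[n] x - gMap^[n] y| ≤ 2 := by
      intro n
      cases n with
      | zero =>
        show |x - y| ≤ 2
        rw [abs_le]
        constructor <;> linarith [hx.1, hx.2, hyI.1, hyI.2]
      | succ n =>
        rw [habs n, abs_le]
        have h1 := tMap_iter_mem hx'01 (n/2)
        have h2 := tMap_iter_mem hy'01 (n/2)
        constructor <;> [linarith [h1.1, h2.2]; linarith [h1.2, h2.1]]
    have hsyn : ∀ ε' > (0:ℝ), ∀ M : ℕ, ∃ n ≥ M, |gMap^[n] x - gMap^[n] y| < ε' := by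
      intro ε' hε' M
      obtain ⟨k, hkM, hk⟩ := hsync ε' hε' M
      refine ⟨2*k+1, by omega, ?_⟩
      rw [habs (2*k), Nat.mul_div_cancel_left k (by norm_num)]
      exact hk
    have hsp : ∀ M : ℕ, ∃ n ≥ M, (1:ℝ)/4 ≤ |gMap^[n] x - gMap^[n] y| := by
      intro M
      obtain ⟨k, hkM, hk⟩ := hsep M
      refine ⟨2*k+1, by omega, ?_⟩
      rw [habs (2*k), Nat.mul_div_cancel_left k (by norm_num)]
      exact hk
    exact conclude _ (fun n => abs_nonneg _) hbound hsyn hsp
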